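/- For every integer b ≥ 2, λ_b ≤ λ_{b+1} ≤ 3 λ_b. -/

import Mathlib

open MeasureTheory Finset Filter

/-- `lamBK μ b k` is `λ_{b,k} = ∫_{[0,1]} x^{k-2} (1-x)^{b-k} dΛ(x)`. -/
noncomputable def lamBK (μ : Measure ℝ) (b k : ℕ) : ℝ :=
  ∫ x in Set.Icc (0:ℝ) 1, x ^ (k - 2) * (1 - x) ^ (b - k) ∂μ

/-- `lamB μ b` is `λ_b = Σ_{k=2}^b C(b,k) λ_{b,k}`. -/
noncomputable def lamB (μ : Measure ℝ) (b : ℕ) : ℝ :=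
  ∑ k ∈ Finset.Icc 2 b, (b.choose k : ℝ) * lamBK μ b k

/-- `gamB μ b` is `γ_b = Σ_{k=2}^b C(b,k) (k-1) λ_{b,k}`. -/
noncomputable def gamB (μ : Measure ℝ) (b : ℕ) : ℝ :=
  ∑ k ∈ Finset.Icc 2 b, (b.choose k : ℝ) * ((k : ℝ) - 1) * lamBK μ b k

lemma intOn (μ : Measure ℝ) [IsFiniteMeasure μ] (c : ℝ) (m n : ℕ) :
    IntegrableOn (fun x : ℝ => c * (x ^ m * (1 - x) ^ n)) (Set.Icc 0 1) μ := by
  apply Continuous.integrableOn_Icc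
  fun_prop

lemma intOn2 (μ : Measure ℝ) [IsFiniteMeasure μ] (c : ℝ) (n : ℕ) :
    IntegrableOn (fun x : ℝ => c * (1 - x) ^ n) (Set.Icc 0 1) μ := by
  apply Continuous.integrableOn_Icc
  fun_prop

lemma intOn3 (μ : Measure ℝ) [IsFiniteMeasure μ] (n : ℕ) :
    IntegrableOn (fun x : ℝ => (1 - x) ^ n) (Set.Icc 0 1) μ := by
  apply Continuous.integrableOn_Icc
  fun_prop

lemma key_sum (m : ℕ) (x : ℝ) :
    ∑ j ∈ Finset.range (m + 2),
        ((m + 3).choose (j + 2) : ℝ) * (x ^ j * (1 - x) ^ (m + 1 - j))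
      = (∑ j ∈ Finset.range (m + 1),
          ((m + 2).choose (j + 2) : ℝ) * (x ^ j * (1 - x) ^ (m - j)))
        + ((m : ℝ) + 2) * (1 - x) ^ (m + 1) := by
  have hsplit : ∀ j : ℕ, ((m + 3).choose (j + 2) : ℝ)
      = ((m + 2).choose (j + 1) : ℝ) + ((m + 2).choose (j + 2) : ℝ) := by
    intro j
    rw [show m + 3 = (m + 2) + 1 from rfl, show j + 2 = (j + 1) + 1 from rfl,
      Nat.choose_succ_succ]
    push_cast; ring
  have hA : ∑ j ∈ Finset.range (m + 2),
      ((m + 2).choose (j + 1) : ℝ) * (x ^ j * (1 - x) ^ (m + 1 - j))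
      = x * (∑ j ∈ Finset.range (m + 1),
          ((m + 2).choose (j + 2) : ℝ) * (x ^ j * (1 - x) ^ (m - j)))
        + ((m : ℝ) + 2) * (1 - x) ^ (m + 1) := by
    have hre : ∀ i ∈ Finset.range (m + 1),
        ((m + 2).choose (i + 1 + 1) : ℝ) * (x ^ (i + 1) * (1 - x) ^ (m + 1 - (i + 1)))
          = x * (((m + 2).choose (i + 2) : ℝ) * (x ^ i * (1 - x) ^ (m - i))) := by
      intro i _
      rw [show m + 1 - (i + 1) = m - i from by omega, show i + 1 + 1 = i + 2 from rfl]
      ring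
    rw [Finset.sum_range_succ', Finset.sum_congr rfl hre, ← Finset.mul_sum]
    norm_num [Nat.choose_one_right]
  have hB : ∑ j ∈ Finset.range (m + 2),
      ((m + 2).choose (j + 2) : ℝ) * (x ^ j * (1 - x) ^ (m + 1 - j))
      = (1 - x) * (∑ j ∈ Finset.range (m + 1),
          ((m + 2).choose (j + 2) : ℝ) * (x ^ j * (1 - x) ^ (m - j))) := by
    rw [Finset.sum_range_succ]
    have hz : (m + 2).choose (m + 1 + 2) = 0 := Nat.choose_eq_zero_of_lt (by omega)
    rw [hz]
    simp only [Nat.cast_zero, zero_mul, add_zero]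
    rw [Finset.mul_sum]
    apply Finset.sum_congr rfl
    intro j hj
    rw [Finset.mem_range] at hj
    have : m + 1 - j = (m - j) + 1 := by omega
    rw [this, pow_succ]
    ring
  calc ∑ j ∈ Finset.range (m + 2),
        ((m + 3).choose (j + 2) : ℝ) * (x ^ j * (1 - x) ^ (m + 1 - j))
      = ∑ j ∈ Finset.range (m + 2),
          (((m + 2).choose (j + 1) : ℝ) * (x ^ j * (1 - x) ^ (m + 1 - j))
            + ((m + 2).choose (j + 2) : ℝ) * (x ^ j * (1 - x) ^ (m + 1 - j))) := by
        apply Finset.sum_congr rfl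
        intro j _
        rw [hsplit j]; ring
    _ = _ := by
        rw [Finset.sum_add_distrib, hA, hB]; ring

lemma lamB_int (μ : Measure ℝ) [IsFiniteMeasure μ] (b : ℕ) :
    lamB μ b = ∫ x in Set.Icc (0:ℝ) 1,
      ∑ j ∈ Finset.range (b - 1),
        (b.choose (j + 2) : ℝ) * (x ^ j * (1 - x) ^ (b - (j + 2))) ∂μ := by
  rw [lamB, ← Finset.Ico_add_one_right_eq_Icc, Finset.sum_Ico_eq_sum_range]
  rw [MeasureTheory.integral_finset_sum _
    (fun j _ => intOn μ (b.choose (j + 2) : ℝ) j (b - (j + 2)))]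
  have hbn : b + 1 - 2 = b - 1 := by omega
  rw [hbn]
  apply Finset.sum_congr rfl
  intro j _
  rw [show 2 + j = j + 2 from by omega]
  rw [lamBK, show j + 2 - 2 = j from by omega]
  rw [← MeasureTheory.integral_const_mul]

lemma lamBK_nonneg (μ : Measure ℝ) (b k : ℕ) : 0 ≤ lamBK μ b k := by
  apply setIntegral_nonneg measurableSet_Icc
  intro x hx
  exact mul_nonneg (pow_nonneg hx.1 _) (pow_nonneg (by linarith [hx.2]) _)

theorem lamB_mono_and_le_three_mul (μ : Measure ℝ) [IsFiniteMeasure μ]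
    (h0 : μ {0} = 0) (h1 : μ {1} = 0)
    (hsupp : μ ((Set.Icc (0:ℝ) 1)ᶜ) = 0) (hpos : 0 < μ (Set.Icc (0:ℝ) 1))
    (b : ℕ) (hb : 2 ≤ b) :
    lamB μ b ≤ lamB μ (b + 1) ∧ lamB μ (b + 1) ≤ 3 * lamB μ b := by
  obtain ⟨m, rfl⟩ : ∃ m, b = m + 2 := ⟨b - 2, by omega⟩
  set I := ∫ x in Set.Icc (0:ℝ) 1, (1 - x) ^ (m + 1) ∂μ with hI
  set J := ∫ x in Set.Icc (0:ℝ) 1, (1 - x) ^ m ∂μ with hJ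
  have hI0 : 0 ≤ I := setIntegral_nonneg measurableSet_Icc
    (fun x hx => pow_nonneg (by linarith [hx.2]) _)
  have hJ0 : 0 ≤ J := setIntegral_nonneg measurableSet_Icc
    (fun x hx => pow_nonneg (by linarith [hx.2]) _)
  -- step: lamB μ (m+3) = lamB μ (m+2) + (m+2) * I
  have hstep : lamB μ (m + 2 + 1) = lamB μ (m + 2) + ((m : ℝ) + 2) * I := by
    rw [show m + 2 + 1 = m + 3 from rfl, lamB_int μ (m + 3), lamB_int μ (m + 2)]
    simp only [show m + 3 - 1 = m + 2 from rfl, show m + 2 - 1 = m + 1 from rfl,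
      show ∀ j : ℕ, m + 3 - (j + 2) = m + 1 - j from fun j => by omega,
      show ∀ j : ℕ, m + 2 - (j + 2) = m - j from fun j => by omega]
    have heq : (fun x : ℝ => ∑ j ∈ Finset.range (m + 2),
        ((m + 3).choose (j + 2) : ℝ) * (x ^ j * (1 - x) ^ (m + 1 - j)))
        = fun x : ℝ => (∑ j ∈ Finset.range (m + 1),
            ((m + 2).choose (j + 2) : ℝ) * (x ^ j * (1 - x) ^ (m - j)))
          + ((m : ℝ) + 2) * (1 - x) ^ (m + 1) := funext (key_sum m)
    rw [heq]
    rw [MeasureTheory.integral_add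
      (MeasureTheory.integrable_finset_sum _
        (fun j _ => intOn μ ((m + 2).choose (j + 2) : ℝ) j (m - j)))
      (intOn2 μ ((m : ℝ) + 2) (m + 1))]
    rw [MeasureTheory.integral_const_mul]
  -- second: (m+2) * I ≤ 2 * lamB μ (m+2)
  have hIJ : I ≤ J := by
    apply setIntegral_mono_on (intOn3 μ (m + 1)) (intOn3 μ m) measurableSet_Icc
    intro x hx
    rw [pow_succ]
    nlinarith [pow_nonneg (by linarith [hx.2] : (0:ℝ) ≤ 1 - x) m, hx.1, hx.2]
  have hchoose : ((m + 2).choose 2 : ℝ) * 2 = ((m : ℝ) + 2) * ((m : ℝ) + 1) := by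
    have h : (m + 2).choose 2 * 2 = (m + 2) * (m + 1) := by
      rw [Nat.choose_two_right, show m + 2 - 1 = m + 1 from rfl]
      apply Nat.div_mul_cancel
      rcases Nat.even_or_odd m with ⟨k, hk⟩ | ⟨k, hk⟩
      · exact ⟨(k + 1) * (2 * k + 1), by subst hk; ring⟩
      · exact ⟨(2 * k + 3) * (k + 1), by subst hk; ring⟩
    calc ((m + 2).choose 2 : ℝ) * 2 = (((m + 2).choose 2 * 2 : ℕ) : ℝ) := by push_cast; ring
      _ = (((m + 2) * (m + 1) : ℕ) : ℝ) := by rw [h]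
      _ = ((m : ℝ) + 2) * ((m : ℝ) + 1) := by push_cast; ring
  have hterm : ((m + 2).choose 2 : ℝ) * J ≤ lamB μ (m + 2) := by
    have h2mem : 2 ∈ Finset.Icc 2 (m + 2) := by simp
    have := Finset.single_le_sum
      (f := fun k => ((m + 2).choose k : ℝ) * lamBK μ (m + 2) k)
      (fun k _ => mul_nonneg (Nat.cast_nonneg _) (lamBK_nonneg μ (m + 2) k)) h2mem
    rw [lamB]
    have hJ2 : lamBK μ (m + 2) 2 = J := by
      rw [lamBK]
      simp
      rfl
    rw [← hJ2]
    exact this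
  have hkey2 : ((m : ℝ) + 2) * I ≤ 2 * lamB μ (m + 2) := by
    have hc : (0:ℝ) ≤ (m : ℝ) + 2 := by positivity
    have hm0 : (0:ℝ) ≤ (m : ℝ) := Nat.cast_nonneg m
    have h1 : ((m : ℝ) + 2) * I ≤ ((m : ℝ) + 2) * ((m : ℝ) + 1) * J := by
      calc ((m : ℝ) + 2) * I ≤ ((m : ℝ) + 2) * J := mul_le_mul_of_nonneg_left hIJ hc
        _ ≤ ((m : ℝ) + 2) * ((m : ℝ) + 1) * J := by
            nlinarith [mul_nonneg (mul_nonneg hc hm0) hJ0]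
    nlinarith [hterm, hchoose, hJ0]
  constructor
  · rw [hstep]
    nlinarith [hI0]
  · rw [hstep]
    linarith [hkey2]
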